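/- arXiv:2003.02581 — 2 statements merged into one kernel-verified Lean document; each statement's English description precedes it below -/
import Mathlib

section
/- If B is a symmetric positive definite m×m real matrix, z = B⁻¹q for some vector q ∈ ℝ^m, and z̃ ∈ ℝ^m is the vector that agrees with y = (B[α])⁻¹ q[α] on an index set α ⊊ {1,...,m} (where B[α] denotes the principal submatrix of B indexed by α and q[α] the corresponding subvector) and is zero elsewhere, then zᵀBz ≥ z̃ᵀBz̃. -/
open Matrix

lemma ext_dot {m : ℕ} (α : Finset (Fin m)) (u : ↥α → ℝ) (w : Fin m → ℝ) :
    (fun i => if h : i ∈ α then u ⟨i, h⟩ else 0) ⬝ᵥ w = ∑ i : ↥α, u i * w i := by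
  classical
  have h1 : ∑ i : Fin m, (if h : i ∈ α then u ⟨i, h⟩ else 0) * w i
      = ∑ i ∈ α, (if h : i ∈ α then u ⟨i, h⟩ else 0) * w i :=
    (Finset.sum_subset (Finset.subset_univ α)
      (fun i _ hi => by rw [dif_neg hi, zero_mul])).symm
  rw [dotProduct, h1, ← Finset.sum_coe_sort α]
  exact Finset.sum_congr rfl fun i _ => by rw [dif_pos i.2]

lemma ext_mulVec {m : ℕ} (α : Finset (Fin m)) (B : Matrix (Fin m) (Fin m) ℝ)
    (u : ↥α → ℝ) (i : ↥α) :
    B.mulVec (fun j => if h : j ∈ α then u ⟨j, h⟩ else 0) ↑i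
      = (B.submatrix (fun k : ↥α => (k : Fin m)) (fun k : ↥α => (k : Fin m))).mulVec u i := by
  rw [mulVec, mulVec, dotProduct_comm, ext_dot]
  exact Finset.sum_congr rfl fun j _ => by simp [submatrix_apply, mul_comm]

lemma ext_quad {m : ℕ} (α : Finset (Fin m)) (B : Matrix (Fin m) (Fin m) ℝ) (u : ↥α → ℝ) :
    (fun i => if h : i ∈ α then u ⟨i, h⟩ else 0) ⬝ᵥ
      B.mulVec (fun i => if h : i ∈ α then u ⟨i, h⟩ else 0)
    = u ⬝ᵥ (B.submatrix (fun k : ↥α => (k : Fin m)) (fun k : ↥α => (k : Fin m))).mulVec u := by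
  rw [ext_dot, dotProduct]
  exact Finset.sum_congr rfl fun i _ => by rw [ext_mulVec]

/-- For `B` symmetric positive definite, `z = B⁻¹q`, and `z̃` the
zero-extension of `y = (B[α])⁻¹ q[α]` for a proper nonempty index set `α`,
we have `zᵀBz ≥ z̃ᵀBz̃`. -/
theorem stmt0 {m : ℕ} (B : Matrix (Fin m) (Fin m) ℝ) (hB : B.PosDef)
    (q : Fin m → ℝ) (α : Finset (Fin m)) (hne : α.Nonempty) (hprop : α ⊂ Finset.univ)
    (z : Fin m → ℝ) (hz : z = B⁻¹.mulVec q)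
    (y : ↥α → ℝ)
    (hy : y = (B.submatrix (fun i : ↥α => (i : Fin m)) (fun i : ↥α => (i : Fin m)))⁻¹.mulVec
        (fun i : ↥α => q i))
    (ztilde : Fin m → ℝ)
    (hzt : ztilde = fun i => if h : i ∈ α then y ⟨i, h⟩ else 0) :
    z ⬝ᵥ B.mulVec z ≥ ztilde ⬝ᵥ B.mulVec ztilde := by
  classical
  set Bα := B.submatrix (fun i : ↥α => (i : Fin m)) (fun i : ↥α => (i : Fin m)) with hBα_def
  -- Bα is positive definite
  have hBα : Bα.PosDef := by
    refine Matrix.PosDef.of_dotProduct_mulVec_pos (hB.isHermitian.submatrix _) fun x hx => ?_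
    have hx' : (fun j => if h : j ∈ α then x ⟨j, h⟩ else 0) ≠ 0 := by
      intro h0
      apply hx
      funext i
      have := congrFun h0 (i : Fin m)
      simpa [i.2] using this
    have hpos := hB.dotProduct_mulVec_pos hx'
    rw [star_trivial] at hpos ⊢
    rw [ext_quad] at hpos
    exact hpos
  have hBz : B.mulVec z = q := by
    rw [hz, mulVec_mulVec, mul_nonsing_inv _ hB.det_pos.ne'.isUnit, one_mulVec]
  have hBαy : Bα.mulVec y = fun i : ↥α => q i := by
    rw [hy, mulVec_mulVec, mul_nonsing_inv _ hBα.det_pos.ne'.isUnit, one_mulVec]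
  have hBt : Bᵀ = B := by
    have := hB.isHermitian
    exact (show B.IsSymm by simpa [conjTranspose, Matrix.map] using this).eq
  -- z̃ᵀ B z̃ = z̃ᵀ q
  have h1 : ztilde ⬝ᵥ B.mulVec ztilde = ztilde ⬝ᵥ q := by
    rw [hzt, ext_quad, ext_dot, hBαy, dotProduct]
  -- z̃ᵀ B z = z̃ᵀ q
  have h2 : ztilde ⬝ᵥ B.mulVec z = ztilde ⬝ᵥ q := by rw [hBz]
  have h3 : z ⬝ᵥ B.mulVec ztilde = ztilde ⬝ᵥ B.mulVec z := by
    rw [dotProduct_mulVec, ← mulVec_transpose, hBt, dotProduct_comm]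
  have h4 : 0 ≤ (z - ztilde) ⬝ᵥ B.mulVec (z - ztilde) := by
    have := hB.posSemidef.dotProduct_mulVec_nonneg (z - ztilde)
    rwa [star_trivial] at this
  rw [mulVec_sub, sub_dotProduct, dotProduct_sub, dotProduct_sub] at h4
  linarith
end

section
/- If the residual r = b - Ax is not orthogonal to the column space of V (where V has full column rank and A is symmetric positive definite), then the orthogonal projection step x' = x + V(VᵀAV)⁻¹Vᵀr strictly decreases the A-norm error: ‖x' - x*‖_A² < ‖x - x*‖_A². -/
open Matrix

lemma mulVec_inj_of_rank {n m : ℕ} (V : Matrix (Fin n) (Fin m) ℝ) (hV : V.rank = m) :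
    Function.Injective V.mulVec := by
  rw [← V.coe_mulVecLin]
  rw [← LinearMap.ker_eq_bot]
  have h := V.mulVecLin.finrank_range_add_finrank_ker
  rw [show Module.finrank ℝ (LinearMap.range V.mulVecLin) = m from hV] at h
  simp only [Module.finrank_fintype_fun_eq_card, Fintype.card_fin] at h
  have : Module.finrank ℝ (LinearMap.ker V.mulVecLin) = 0 := by omega
  exact Submodule.finrank_eq_zero.mp this

/-- if the residual is not orthogonal to the column space of `V`,
the projection step strictly decreases the A-norm error. -/
theorem stmt4 {n m : ℕ} (A : Matrix (Fin n) (Fin n) ℝ) (hA : A.PosDef)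
    (b xs : Fin n → ℝ) (hxs : A.mulVec xs = b)
    (V : Matrix (Fin n) (Fin m) ℝ) (hV : V.rank = m)
    (x r : Fin n → ℝ) (hr : r = b - A.mulVec x)
    (hperp : Vᵀ.mulVec r ≠ 0)
    (x' : Fin n → ℝ)
    (hx' : x' = x + V.mulVec ((Vᵀ * A * V)⁻¹.mulVec (Vᵀ.mulVec r))) :
    (x' - xs) ⬝ᵥ A.mulVec (x' - xs) < (x - xs) ⬝ᵥ A.mulVec (x - xs) := by
  have hinj := mulVec_inj_of_rank V hV
  set B := Vᵀ * A * V with hB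
  set c := Vᵀ.mulVec r with hc
  set y := B⁻¹.mulVec c with hy
  -- B is positive definite
  have hBpd : B.PosDef := by
    refine PosDef.of_dotProduct_mulVec_pos ?_ fun z hz => ?_
    · rw [hB, ← V.conjTranspose_eq_transpose_of_trivial]
      exact isHermitian_conjTranspose_mul_mul V hA.1
    · have hVz : V.mulVec z ≠ 0 := fun h => hz (hinj (h.trans (V.mulVec_zero).symm))
      have := hA.dotProduct_mulVec_pos hVz
      simp only [star_trivial] at this ⊢
      rw [hB, Matrix.mul_assoc, ← mulVec_mulVec, ← mulVec_mulVec,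
        dotProduct_mulVec z Vᵀ, vecMul_transpose]
      exact this
  have hBdet : IsUnit B.det := (Matrix.isUnit_iff_isUnit_det B).mp hBpd.isUnit
  have hBy : B.mulVec y = c := by
    rw [hy, mulVec_mulVec, Matrix.mul_nonsing_inv B hBdet, one_mulVec]
  -- the error vector
  set e := x - xs with he
  have hAe : A.mulVec e = -r := by
    rw [he, mulVec_sub, hxs, hr]; abel
  have hx'e : x' - xs = e + V.mulVec y := by
    rw [hx', he]; abel
  -- key dot product identities
  have hAT : Aᵀ = A := by
    rw [← A.conjTranspose_eq_transpose_of_trivial]; exact hA.1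
  have hsym : ∀ v w : Fin n → ℝ, v ⬝ᵥ A.mulVec w = A.mulVec v ⬝ᵥ w := by
    intro v w
    rw [dotProduct_mulVec, ← mulVec_transpose, hAT]
  have hVy : ∀ w : Fin n → ℝ, V.mulVec y ⬝ᵥ w = y ⬝ᵥ Vᵀ.mulVec w := by
    intro w
    rw [dotProduct_mulVec, ← vecMul_transpose, ← dotProduct_mulVec]
  have key : (x' - xs) ⬝ᵥ A.mulVec (x' - xs) = e ⬝ᵥ A.mulVec e - c ⬝ᵥ y := by
    have h1 : e ⬝ᵥ A.mulVec (V.mulVec y) = -(c ⬝ᵥ y) := by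
      rw [hsym, hAe, neg_dotProduct, neg_inj, dotProduct_comm, hVy, ← hc, dotProduct_comm]
    have h2 : V.mulVec y ⬝ᵥ A.mulVec e = -(c ⬝ᵥ y) := by
      rw [hAe, hVy, mulVec_neg, dotProduct_neg, neg_inj, ← hc, dotProduct_comm]
    have h3 : V.mulVec y ⬝ᵥ A.mulVec (V.mulVec y) = c ⬝ᵥ y := by
      rw [hVy, mulVec_mulVec, mulVec_mulVec, ← hB, hBy, dotProduct_comm]
    rw [hx'e]
    simp only [mulVec_add, dotProduct_add, add_dotProduct]
    rw [h1, h2, h3]; ring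
  rw [key]
  have hpos : 0 < c ⬝ᵥ y := by
    have := hBpd.inv.dotProduct_mulVec_pos hperp
    simpa [hy, star_trivial] using this
  linarith
end
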